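/- There are exactly two linear equivalence classes of nil-polynomials on ℂ², represented by P(x₁,x₂) = x₁x₂ + x₁³ and P̃(x₁,x₂) = x₁x₂; equivalently, there are exactly two 3-dimensional admissible algebras up to isomorphism: the one generated by an element t with t⁴ = 0, and the one with basis a, b, c where a² = b² = c, ab = 0 = ac = bc = c². -/

import Mathlib

set_option linter.unusedSectionVars false
set_option maxHeartbeats 1000000


open Finset

/-- Annihilator `Ann(N) = {u ∈ N : uN = 0}` of a non-unital commutative ℂ-algebra. -/
def annN (N : Type*) [NonUnitalCommRing N] [Module ℂ N] [IsScalarTower ℂ N N] :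
    Submodule ℂ N where
  carrier := {u | ∀ v : N, u * v = 0}
  add_mem' := fun ha hb v => by rw [add_mul, ha v, hb v, add_zero]
  zero_mem' := fun v => zero_mul v
  smul_mem' := fun c a ha v => by rw [smul_mul_assoc, ha v, smul_zero]

/-- The descending chain of ideals: `npow N j` is `N^j` for `j ≥ 1`
(`N^1 = N`, `N^{j+1} = span(N·N^j)`; `npow N 0 := ⊤` by convention). -/
def npow (N : Type*) [NonUnitalCommRing N] [Module ℂ N] : ℕ → Submodule ℂ N
  | 0 => ⊤
  | 1 => ⊤
  | (j+2) => Submodule.span ℂ {x : N | ∃ u : N, ∃ v ∈ npow N (j+1), x = u * v}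

/-- Powers `u^m` of an element in a non-unital commutative ring
(`upow u 0 := 0` by convention; only `m ≥ 1` is used). -/
def upow {N : Type*} [NonUnitalCommRing N] (u : N) : ℕ → N
  | 0 => 0
  | 1 => u
  | (m+2) => u * upow u (m+1)


section AuxLemmas

variable {N : Type} [NonUnitalCommRing N] [Module ℂ N] [SMulCommClass ℂ N N]
  [IsScalarTower ℂ N N]

lemma npow_succ (j : ℕ) : npow N (j+2) =
    Submodule.span ℂ {x : N | ∃ u : N, ∃ v ∈ npow N (j+1), x = u * v} := rfl

lemma mem_annN {u : N} : u ∈ annN N ↔ ∀ v : N, u * v = 0 := Iff.rfl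

lemma mul_mem_npow2 (u v : N) : u * v ∈ npow N 2 :=
  Submodule.subset_span ⟨u, v, Submodule.mem_top, rfl⟩

lemma npow_succ_le (j : ℕ) : npow N (j+1) ≤ npow N j := by
  induction j with
  | zero => exact le_top
  | succ j ih =>
    cases j with
    | zero => exact le_top
    | succ j =>
      rw [npow_succ, npow_succ]
      apply Submodule.span_mono
      rintro x ⟨u, v, hv, rfl⟩
      exact ⟨u, v, ih hv, rfl⟩

lemma npow_antitone : Antitone (npow N) := antitone_nat_of_succ_le npow_succ_le

lemma mul_mem_npow {u v : N} (i j : ℕ) (hu : u ∈ npow N (i+1)) (hv : v ∈ npow N (j+1)) :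
    u * v ∈ npow N (i+j+2) := by
  induction i generalizing u with
  | zero =>
    rw [zero_add]
    exact Submodule.subset_span ⟨u, v, hv, rfl⟩
  | succ i ih =>
    have : npow N (i+2) ≤ (npow N (i+j+3)).comap (LinearMap.mulRight ℂ v) := by
      rw [npow_succ]
      apply Submodule.span_le.2
      rintro x ⟨p, q, hq, rfl⟩
      simp only [SetLike.mem_coe, Submodule.mem_comap, LinearMap.mulRight_apply]
      rw [mul_assoc]
      have hqv : q * v ∈ npow N (i+j+2) := ih hq
      exact Submodule.subset_span ⟨p, q * v, hqv, rfl⟩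
    have := this hu
    simp only [Submodule.mem_comap, LinearMap.mulRight_apply] at this
    rwa [show i+1+j+2 = i+j+3 from by omega]

lemma upow_mem (u : N) (ℓ : ℕ) : upow u ℓ ∈ npow N ℓ := by
  induction ℓ with
  | zero => exact Submodule.mem_top
  | succ ℓ ih =>
    cases ℓ with
    | zero => exact Submodule.mem_top
    | succ ℓ =>
      show u * upow u (ℓ+1) ∈ npow N (ℓ+2)
      have := mul_mem_npow 0 ℓ (Submodule.mem_top (x := u)) ih
      rwa [zero_add] at this

lemma npow_stab {k m : ℕ} (h : npow N (k+2) = npow N (k+1)) :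
    npow N (k+1+m) = npow N (k+1) := by
  induction m with
  | zero => rfl
  | succ m ih =>
    cases m with
    | zero => exact h
    | succ m =>
      rw [show k+1+(m+1+1) = (k+m+1)+2 from by omega, npow_succ,
        show k+m+1+1 = k+1+(m+1) from by omega, ih, ← npow_succ k]
      exact h

lemma npow_eq_bot_of_stab {ν k : ℕ} (hν : npow N (ν+1) = ⊥)
    (h : npow N (k+2) = npow N (k+1)) : npow N (k+1) = ⊥ := by
  rcases le_or_gt (k+1) (ν+1) with hle | hlt
  · obtain ⟨m, hm⟩ := Nat.exists_eq_add_of_le hle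
    rw [← npow_stab h (m := m), ← hm, hν]
  · exact le_bot_iff.1 (hν ▸ npow_antitone hlt.le)

variable [FiniteDimensional ℂ N]

lemma expand_mul (α β : ℂ) (p q s s' : N) :
    (α•p + s) * (β•q + s') = (α*β)•(p*q) + (α•(p*s') + (β•(s*q) + s*s')) := by
  simp only [add_mul, mul_add, smul_mul_assoc, mul_smul_comm, smul_smul, smul_add]
  module

lemma top_ne (hdim : Module.finrank ℂ N = 3) : (⊤ : Submodule ℂ N) ≠ ⊥ := by
  intro h
  have : Module.finrank ℂ N = 0 := by
    rw [← finrank_top ℂ N, h, finrank_bot]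
  omega

lemma classify (ν : ℕ) (hν : npow N (ν+1) = ⊥) (hann : Module.finrank ℂ (annN N) = 1)
    (hdim : Module.finrank ℂ N = 3) :
    (∃ t : N, upow t 4 = 0 ∧ Submodule.span ℂ {t, t * t, t * (t * t)} = ⊤) ∨
    (∃ a b : N, a * a = b * b ∧ a * b = 0 ∧ a * (a * a) = 0 ∧ b * (a * a) = 0 ∧
      (a * a) * (a * a) = 0 ∧ Submodule.span ℂ {a, b, a * a} = ⊤) := by
  have hS2ne : npow N 2 ≠ ⊤ := by
    intro h
    have h1 : npow N (0+2) = npow N (0+1) := h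
    have h2 := npow_eq_bot_of_stab hν h1
    rw [show npow N (0+1) = (⊤ : Submodule ℂ N) from rfl] at h2
    exact top_ne hdim h2
  have hd2 : Module.finrank ℂ (npow N 2) < 3 := by
    rw [← hdim]
    exact Submodule.finrank_lt hS2ne
  rcases (show Module.finrank ℂ (npow N 2) = 0 ∨ Module.finrank ℂ (npow N 2) = 1 ∨
      Module.finrank ℂ (npow N 2) = 2 by omega) with h2 | h2 | h2
  · -- dim N² = 0 : contradiction
    exfalso
    have hbot : npow N 2 = ⊥ := Submodule.finrank_eq_zero.1 h2
    have : annN N = ⊤ := by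
      rw [eq_top_iff]
      intro u _ v
      have : u * v ∈ npow N 2 := mul_mem_npow2 u v
      rw [hbot] at this
      exact this
    rw [this] at hann
    rw [finrank_top ℂ N, hdim] at hann
    omega
  · -- dim N² = 1 : right branch
    right
    have hS3 : npow N 3 = ⊥ := by
      by_cases h : npow N (1+2) = npow N (1+1)
      · exfalso
        have hb := npow_eq_bot_of_stab hν h
        have h0 : Module.finrank ℂ (npow N 2) = 0 := by
          rw [show (2:ℕ) = 1+1 from rfl, hb, finrank_bot]
        omega
      · have hlt : npow N 3 < npow N 2 := lt_of_le_of_ne (npow_succ_le 2) h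
        have := Submodule.finrank_lt_finrank_of_lt hlt
        rw [h2] at this
        exact Submodule.finrank_eq_zero.1 (by omega)
    have hS2ann : npow N 2 ≤ annN N := by
      intro w hw v
      have : v * w ∈ npow N (0+1+2) := mul_mem_npow 0 1 Submodule.mem_top hw
      rw [show (0+1+2 : ℕ) = 3 from rfl, hS3] at this
      rw [mul_comm]
      exact this
    have hS2eq : npow N 2 = annN N :=
      Submodule.eq_of_le_of_finrank_le hS2ann (by rw [hann, h2])
    -- get a generator c of annN
    have hannbot : annN N ≠ ⊥ := by
      intro h; rw [h, finrank_bot] at hann; omega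
    obtain ⟨c, hcann, hc0⟩ := Submodule.exists_mem_ne_zero_of_ne_bot hannbot
    have spanc : Submodule.span ℂ {c} = annN N := by
      apply Submodule.eq_of_le_of_finrank_le
      · rw [Submodule.span_le, Set.singleton_subset_iff]; exact hcann
      · rw [hann, finrank_span_singleton hc0]
    have hprod : ∀ u v : N, u * v ∈ Submodule.span ℂ {c} := by
      intro u v
      rw [spanc, ← hS2eq]
      exact mul_mem_npow2 u v
    -- find a with a*a ≠ 0
    have hex : ∃ a : N, a * a ≠ 0 := by
      by_contra h
      push_neg at h
      have hall : ∀ u v : N, u * v = 0 := by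
        intro u v
        have hsum : u * v + u * v = 0 := by
          have := h (u + v)
          have e : (u+v)*(u+v) = u*u + (u*v + (v*u + v*v)) := by
            rw [add_mul, mul_add, mul_add]; abel
          rw [e, h u, h v, mul_comm v u, zero_add, add_zero] at this
          exact this
        have h2s : (2:ℂ) • (u*v) = 0 := by rw [two_smul]; exact hsum
        have := congrArg (fun x => (2:ℂ)⁻¹ • x) h2s
        simpa [smul_smul] using this
      have : npow N 2 = ⊥ := by
        rw [npow_succ, Submodule.span_eq_bot]
        rintro x ⟨u, v, _, rfl⟩
        exact hall u v
      rw [this, finrank_bot] at h2; omega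
    obtain ⟨a, ha⟩ := hex
    obtain ⟨s, hs⟩ := Submodule.mem_span_singleton.1 (hprod a a)
    have hs0 : s ≠ 0 := by rintro rfl; rw [zero_smul] at hs; exact ha hs.symm
    -- K = ker (mulLeft a), finrank 2
    set K := LinearMap.ker (LinearMap.mulLeft ℂ a) with hK
    have hrange : LinearMap.range (LinearMap.mulLeft ℂ a) ≤ Submodule.span ℂ {c} := by
      rintro x ⟨v, rfl⟩
      exact hprod a v
    have hrk : Module.finrank ℂ (LinearMap.range (LinearMap.mulLeft ℂ a)) = 1 := by
      have hle : Module.finrank ℂ (LinearMap.range (LinearMap.mulLeft ℂ a)) ≤ 1 := by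
        have := Submodule.finrank_mono hrange
        rwa [finrank_span_singleton hc0] at this
      have hne : LinearMap.range (LinearMap.mulLeft ℂ a) ≠ ⊥ := by
        intro h
        have : a * a ∈ LinearMap.range (LinearMap.mulLeft ℂ a) := ⟨a, rfl⟩
        rw [h] at this
        exact ha this
      have := mt Submodule.finrank_eq_zero.1 hne
      omega
    have hKrank : Module.finrank ℂ K = 2 := by
      have := LinearMap.finrank_range_add_finrank_ker (LinearMap.mulLeft ℂ a)
      rw [hrk, hdim, ← hK] at this
      omega
    have hcK : c ∈ K := by
      show a * c = 0
      rw [mul_comm]; exact hcann a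
    -- v₀ ∈ K \ span{c}
    have hex2 : ∃ v₀ ∈ K, v₀ ∉ Submodule.span ℂ ({c} : Set N) := by
      by_contra h
      push_neg at h
      have : K ≤ Submodule.span ℂ {c} := h
      have := Submodule.finrank_mono this
      rw [hKrank, finrank_span_singleton hc0] at this
      omega
    obtain ⟨v₀, hv₀K, hv₀c⟩ := hex2
    have hKeq : Submodule.span ℂ {v₀} ⊔ Submodule.span ℂ {c} = K := by
      apply Submodule.eq_of_le_of_finrank_le
      · apply sup_le <;> rw [Submodule.span_le, Set.singleton_subset_iff]
        exacts [hv₀K, hcK]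
      · rw [hKrank]
        have hlt : Submodule.span ℂ ({c} : Set N) <
            Submodule.span ℂ {v₀} ⊔ Submodule.span ℂ {c} := by
          refine lt_of_le_of_ne le_sup_right ?_
          intro h
          apply hv₀c
          rw [h]
          exact Submodule.mem_sup_left (Submodule.mem_span_singleton_self v₀)
        have := Submodule.finrank_lt_finrank_of_lt hlt
        rw [finrank_span_singleton hc0] at this
        omega
    have haK : a ∉ K := by
      intro h
      exact ha h
    have htop : Submodule.span ℂ {a} ⊔ K = ⊤ := by
      apply Submodule.eq_top_of_finrank_eq
      rw [hdim]
      have hlt : K < Submodule.span ℂ {a} ⊔ K := by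
        refine lt_of_le_of_ne le_sup_right ?_
        intro h
        exact haK (h ▸ Submodule.mem_sup_left (Submodule.mem_span_singleton_self a))
      have h3 := Submodule.finrank_lt_finrank_of_lt hlt
      have h4 : Module.finrank ℂ (Submodule.span ℂ {a} ⊔ K : Submodule ℂ N) ≤ 3 :=
        hdim ▸ Submodule.finrank_le _
      omega
    have spanAll : Submodule.span ℂ {a, v₀, c} = ⊤ := by
      rw [show ({a, v₀, c} : Set N) = insert a {v₀, c} from rfl, Submodule.span_insert,
        show ({v₀, c} : Set N) = insert v₀ {c} from rfl, Submodule.span_insert, hKeq, htop]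
    -- v₀ * v₀ ≠ 0
    have hv₀v₀ : v₀ * v₀ ≠ 0 := by
      intro h
      apply hv₀c
      rw [spanc]
      intro u
      have : (⊤ : Submodule ℂ N) ≤ LinearMap.ker (LinearMap.mulLeft ℂ v₀) := by
        rw [← spanAll, Submodule.span_le]
        rintro x hx
        simp only [Set.mem_insert_iff, Set.mem_singleton_iff] at hx
        rcases hx with hxa | hxv | hxc
        · show v₀ * x = 0
          rw [hxa, mul_comm]; exact hv₀K
        · show v₀ * x = 0
          rw [hxv]; exact h
        · show v₀ * x = 0
          rw [hxc, mul_comm]; exact hcann v₀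
      exact this Submodule.mem_top
    obtain ⟨s', hs'⟩ := Submodule.mem_span_singleton.1 (hprod v₀ v₀)
    have hs'0 : s' ≠ 0 := by rintro rfl; rw [zero_smul] at hs'; exact hv₀v₀ hs'.symm
    obtain ⟨r, hr⟩ := IsAlgClosed.exists_pow_nat_eq (k := ℂ) (s / s') (n := 2) (by omega)
    have hr0 : r ≠ 0 := by
      intro h
      rw [h, zero_pow (by omega)] at hr
      exact div_ne_zero hs0 hs'0 hr.symm
    refine ⟨a, r • v₀, ?_, ?_, ?_, ?_, ?_, ?_⟩
    · -- a*a = b*b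
      rw [smul_mul_assoc, mul_smul_comm, smul_smul, ← hs', ← hs, smul_smul, ← sq, hr,
        div_mul_cancel₀ _ hs'0]
    · rw [mul_smul_comm]
      have : a * v₀ = 0 := hv₀K
      rw [this, smul_zero]
    · rw [← hs, mul_smul_comm, show a * c = 0 from by rw [mul_comm]; exact hcann a, smul_zero]
    · rw [← hs, mul_smul_comm, smul_mul_assoc,
        show v₀ * c = 0 from by rw [mul_comm]; exact hcann v₀, smul_zero, smul_zero]
    · rw [← hs, smul_mul_assoc, mul_smul_comm, hcann c, smul_zero, smul_zero]
    · rw [← hs]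
      rw [show ({a, r • v₀, s • c} : Set N) = insert a {r • v₀, s • c} from rfl,
        Submodule.span_insert,
        show ({r • v₀, s • c} : Set N) = insert (r • v₀) {s • c} from rfl,
        Submodule.span_insert]
      rw [show Submodule.span ℂ ({r • v₀} : Set N) = Submodule.span ℂ {v₀} from by
          simpa using Submodule.span_singleton_smul_eq (isUnit_iff_ne_zero.2 hr0) v₀,
        show Submodule.span ℂ ({s • c} : Set N) = Submodule.span ℂ {c} from by
          simpa using Submodule.span_singleton_smul_eq (isUnit_iff_ne_zero.2 hs0) c]
      rw [hKeq, htop]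
  · -- dim N² = 2 : left branch
    left
    have hS3lt : Module.finrank ℂ (npow N 3) < 2 := by
      by_cases h : npow N (1+2) = npow N (1+1)
      · exfalso
        have hb := npow_eq_bot_of_stab hν h
        have h0 : Module.finrank ℂ (npow N 2) = 0 := by
          rw [show (2:ℕ) = 1+1 from rfl, hb, finrank_bot]
        omega
      · have hlt : npow N 3 < npow N 2 := lt_of_le_of_ne (npow_succ_le 2) h
        have := Submodule.finrank_lt_finrank_of_lt hlt
        omega
    have hS3ne : npow N 3 ≠ ⊥ := by
      intro h3
      have hS2ann : npow N 2 ≤ annN N := by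
        intro w hw v
        have : v * w ∈ npow N (0+1+2) := mul_mem_npow 0 1 Submodule.mem_top hw
        rw [show (0+1+2 : ℕ) = 3 from rfl, h3] at this
        rw [mul_comm]
        exact this
      have := Submodule.finrank_mono hS2ann
      rw [h2, hann] at this
      omega
    have hS3rank : Module.finrank ℂ (npow N 3) = 1 := by
      have := mt Submodule.finrank_eq_zero.1 hS3ne
      omega
    have hS4 : npow N 4 = ⊥ := by
      by_cases h : npow N (2+2) = npow N (2+1)
      · exact npow_eq_bot_of_stab hν h ▸ h
      · have hlt : npow N 4 < npow N 3 := lt_of_le_of_ne (npow_succ_le 3) h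
        have := Submodule.finrank_lt_finrank_of_lt hlt
        exact Submodule.finrank_eq_zero.1 (by omega)
    -- pick t ∉ N²
    obtain ⟨t, htS2⟩ : ∃ t : N, t ∉ npow N 2 := by
      by_contra h
      push_neg at h
      exact hS2ne (Submodule.eq_top_iff'.2 h)
    have htop : Submodule.span ℂ {t} ⊔ npow N 2 = ⊤ := by
      apply Submodule.eq_top_of_finrank_eq
      rw [hdim]
      have hlt : npow N 2 < Submodule.span ℂ {t} ⊔ npow N 2 := by
        refine lt_of_le_of_ne le_sup_right ?_
        intro h
        exact htS2 (h ▸ Submodule.mem_sup_left (Submodule.mem_span_singleton_self t))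
      have h3 := Submodule.finrank_lt_finrank_of_lt hlt
      have h4 : Module.finrank ℂ (Submodule.span ℂ {t} ⊔ npow N 2 : Submodule ℂ N) ≤ 3 :=
        hdim ▸ Submodule.finrank_le _
      omega
    have hS2eq : npow N 2 = Submodule.span ℂ {t * t} ⊔ npow N 3 := by
      apply le_antisymm
      · rw [npow_succ 0, Submodule.span_le]
        rintro x ⟨u, v, -, rfl⟩
        have hu : u ∈ Submodule.span ℂ {t} ⊔ npow N 2 := htop ▸ Submodule.mem_top
        have hv : v ∈ Submodule.span ℂ {t} ⊔ npow N 2 := htop ▸ Submodule.mem_top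
        obtain ⟨y, hy, su, hsu, rfl⟩ := Submodule.mem_sup.1 hu
        obtain ⟨z, hz, sv, hsv, rfl⟩ := Submodule.mem_sup.1 hv
        obtain ⟨α, rfl⟩ := Submodule.mem_span_singleton.1 hy
        obtain ⟨β, rfl⟩ := Submodule.mem_span_singleton.1 hz
        rw [expand_mul]
        refine Submodule.add_mem _ (Submodule.mem_sup_left ?_) (Submodule.mem_sup_right ?_)
        · exact Submodule.smul_mem _ _ (Submodule.mem_span_singleton_self _)
        · refine Submodule.add_mem _ ?_ (Submodule.add_mem _ ?_ ?_)
          · refine Submodule.smul_mem _ _ ?_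
            have := mul_mem_npow 0 1 (Submodule.mem_top (x := t)) hsv
            rwa [zero_add] at this
          · refine Submodule.smul_mem _ _ ?_
            rw [mul_comm]
            have := mul_mem_npow 0 1 (Submodule.mem_top (x := t)) hsu
            rwa [zero_add] at this
          · exact npow_succ_le 3 (mul_mem_npow 1 1 hsu hsv)
      · refine sup_le ?_ (npow_succ_le 2)
        rw [Submodule.span_le, Set.singleton_subset_iff]
        exact mul_mem_npow2 t t
    have hS3le : npow N 3 ≤ Submodule.span ℂ {t * (t * t)} := by
      rw [npow_succ 1, Submodule.span_le]
      rintro x ⟨u, v, hv, rfl⟩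
      have hu : u ∈ Submodule.span ℂ {t} ⊔ npow N 2 := htop ▸ Submodule.mem_top
      obtain ⟨y, hy, su, hsu, rfl⟩ := Submodule.mem_sup.1 hu
      obtain ⟨α, rfl⟩ := Submodule.mem_span_singleton.1 hy
      rw [hS2eq] at hv
      obtain ⟨z, hz, w, hw, rfl⟩ := Submodule.mem_sup.1 hv
      obtain ⟨γ, rfl⟩ := Submodule.mem_span_singleton.1 hz
      have e1 : t * w = 0 := by
        have := mul_mem_npow 0 2 (Submodule.mem_top (x := t)) hw
        rw [zero_add, hS4] at this
        exact this
      have e2 : su * (t * t) = 0 := by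
        have := mul_mem_npow 1 1 hsu (mul_mem_npow2 t t)
        rw [hS4] at this
        exact this
      have e3 : su * w = 0 := by
        have h5 := mul_mem_npow 1 2 hsu hw
        have : su * w ∈ npow N 4 := npow_succ_le 4 h5
        rw [hS4] at this
        exact this
      rw [expand_mul, e1, e2, e3, smul_zero, smul_zero, add_zero, add_zero, add_zero]
      exact Submodule.smul_mem _ _ (Submodule.mem_span_singleton_self _)
    have hS3eq : npow N 3 = Submodule.span ℂ {t * (t * t)} := by
      apply le_antisymm hS3le
      rw [Submodule.span_le, Set.singleton_subset_iff]
      exact upow_mem t 3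
    refine ⟨t, ?_, ?_⟩
    · have := upow_mem t 4 (N := N)
      rw [hS4] at this
      exact this
    · rw [show ({t, t*t, t*(t*t)} : Set N) = insert t {t*t, t*(t*t)} from rfl,
        Submodule.span_insert,
        show ({t*t, t*(t*t)} : Set N) = insert (t*t) {t*(t*t)} from rfl,
        Submodule.span_insert, ← hS3eq, ← hS2eq, htop]

lemma basis_of_span (hdim : Module.finrank ℂ N = 3) (v : Fin 3 → N)
    (hsp : Submodule.span ℂ {v 0, v 1, v 2} = ⊤) :
    ∃ B : Module.Basis (Fin 3) ℂ N, (∀ i, B i = v i) ∧ LinearIndependent ℂ v := by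
  have hr : Set.range v = {v 0, v 1, v 2} := by
    ext x
    constructor
    · rintro ⟨i, rfl⟩
      fin_cases i <;> simp
    · intro hx
      simp only [Set.mem_insert_iff, Set.mem_singleton_iff] at hx
      rcases hx with rfl | rfl | rfl
      exacts [⟨0, rfl⟩, ⟨1, rfl⟩, ⟨2, rfl⟩]
  have hle : ⊤ ≤ Submodule.span ℂ (Set.range v) := by rw [hr, hsp]
  have hli := linearIndependent_of_top_le_span_of_card_eq_finrank hle (by simp [hdim])
  exact ⟨Module.Basis.mk hli hle, fun i => Module.Basis.mk_apply hli hle i, hli⟩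

lemma part1 (ν : ℕ) (hν : npow N (ν+1) = ⊥) (hann : Module.finrank ℂ (annN N) = 1)
    (hdim : Module.finrank ℂ N = 3)
    (ω : N →ₗ[ℂ] ℂ) (hω : ∃ a ∈ annN N, ω a ≠ 0)
    (φ : (Fin 2 → ℂ) →ₗ[ℂ] N) (hφ : Function.Injective φ)
    (hrange : LinearMap.range φ = LinearMap.ker ω) :
    ∃ (c : ℂ) (g : (Fin 2 → ℂ) ≃ₗ[ℂ] (Fin 2 → ℂ)), c ≠ 0 ∧
      ((∀ x : Fin 2 → ℂ,
          ∑ ℓ ∈ Finset.Icc 2 ν, ((Nat.factorial ℓ : ℂ))⁻¹ * ω (upow (φ x) ℓ)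
            = c * (g x 0 * g x 1 + (g x 0) ^ 3)) ∨
       (∀ x : Fin 2 → ℂ,
          ∑ ℓ ∈ Finset.Icc 2 ν, ((Nat.factorial ℓ : ℂ))⁻¹ * ω (upow (φ x) ℓ)
            = c * (g x 0 * g x 1))) := by
  rcases classify ν hν hann hdim with ⟨t, ht4, htsp⟩ | ⟨a, b, hab, hab0, ha3, hb3, hee, hsp⟩
  · -- Case A
    have z14 : t*(t*(t*t)) = 0 := ht4
    have a21 : (t*t)*t = t*(t*t) := mul_assoc t t t
    have z41 : (t*(t*t))*t = 0 := by rw [mul_comm]; exact z14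
    have z22 : (t*t)*(t*t) = 0 := by rw [mul_assoc]; exact z14
    have z23 : (t*t)*(t*(t*t)) = 0 := by rw [mul_assoc, z14, mul_zero]
    have z32 : (t*(t*t))*(t*t) = 0 := by rw [mul_comm]; exact z23
    have z33 : (t*(t*t))*(t*(t*t)) = 0 := by rw [mul_assoc, z23, mul_zero]
    obtain ⟨B, hBi, hli⟩ := basis_of_span hdim ![t, t*t, t*(t*t)] (by simpa using htsp)
    have ht3ne : t*(t*t) ≠ 0 := by simpa using hli.ne_zero 2
    have ht3ann : t*(t*t) ∈ annN N := by
      intro v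
      have hv : v ∈ Submodule.span ℂ ({t, t*t, t*(t*t)} : Set N) := by
        rw [htsp]; exact Submodule.mem_top
      have hker : Submodule.span ℂ ({t, t*t, t*(t*t)} : Set N) ≤
          LinearMap.ker (LinearMap.mulLeft ℂ (t*(t*t))) := by
        rw [Submodule.span_le]
        rintro x hx
        simp only [Set.mem_insert_iff, Set.mem_singleton_iff] at hx
        rcases hx with rfl | rfl | rfl
        exacts [z41, z32, z33]
      exact hker hv
    have hann_eq : Submodule.span ℂ {t*(t*t)} = annN N := by
      apply Submodule.eq_of_le_of_finrank_le
      · rw [Submodule.span_le, Set.singleton_subset_iff]; exact ht3ann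
      · rw [hann, finrank_span_singleton ht3ne]
    have hωt3 : ω (t*(t*t)) ≠ 0 := by
      obtain ⟨z, hzann, hz0⟩ := hω
      rw [← hann_eq] at hzann
      obtain ⟨γ, rfl⟩ := Submodule.mem_span_singleton.1 hzann
      intro h
      rw [map_smul, smul_eq_mul, h, mul_zero] at hz0
      exact hz0 rfl
    have hν3 : 3 ≤ ν := by
      by_contra hc
      push_neg at hc
      have hle : npow N 3 ≤ npow N (ν+1) := npow_antitone (by omega)
      rw [hν] at hle
      have h3 : t*(t*t) ∈ npow N 3 := upow_mem t 3
      exact ht3ne (by simpa using hle h3)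
    set Xl := (B.coord 0).comp φ with hXl
    set Yl := (B.coord 1).comp φ with hYl
    set Zl := (B.coord 2).comp φ with hZl
    have hcoord : ∀ x, φ x = Xl x • t + Yl x • (t*t) + Zl x • (t*(t*t)) := by
      intro x
      conv_lhs => rw [← B.sum_repr (φ x)]
      rw [Fin.sum_univ_three]
      simp only [hXl, hYl, hZl, LinearMap.comp_apply, Module.Basis.coord_apply]
      rw [hBi 0, hBi 1, hBi 2]
      simp
    have hu2 : ∀ x, (φ x) * (φ x)
        = (Xl x * Xl x) • (t*t) + (2*(Xl x * Yl x)) • (t*(t*t)) := by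
      intro x
      rw [hcoord x]
      simp only [add_mul, mul_add, smul_mul_assoc, mul_smul_comm, smul_smul,
        a21, z14, z41, z22, z23, z32, z33, smul_zero, add_zero, zero_add]
      module
    have hut3 : ∀ x, (φ x) * (t*(t*t)) = 0 := by
      intro x
      rw [hcoord x, add_mul, add_mul, smul_mul_assoc, smul_mul_assoc, smul_mul_assoc,
        z14, z23, z33, smul_zero, smul_zero, smul_zero, add_zero, add_zero]
    have hut2 : ∀ x, (φ x) * (t*t) = Xl x • (t*(t*t)) := by
      intro x
      rw [hcoord x, add_mul, add_mul, smul_mul_assoc, smul_mul_assoc, smul_mul_assoc,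
        z22, z32, smul_zero, smul_zero, add_zero, add_zero]
    have hu3 : ∀ x, upow (φ x) 3 = (Xl x * Xl x * Xl x) • (t*(t*t)) := by
      intro x
      show (φ x) * ((φ x) * (φ x)) = _
      rw [hu2 x, mul_add, mul_smul_comm, mul_smul_comm, hut2 x, hut3 x, smul_zero, add_zero,
        smul_smul]
    have hu4 : ∀ x, upow (φ x) 4 = 0 := by
      intro x
      show (φ x) * upow (φ x) 3 = 0
      rw [hu3 x, mul_smul_comm, hut3 x, smul_zero]
    have hupow : ∀ x m, upow (φ x) (m+4) = 0 := by
      intro x m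
      induction m with
      | zero => exact hu4 x
      | succ m ih =>
        show (φ x) * upow (φ x) (m+4) = 0
        rw [ih, mul_zero]
    have hsum : ∀ x, ∑ ℓ ∈ Finset.Icc 2 ν, ((Nat.factorial ℓ : ℂ))⁻¹ * ω (upow (φ x) ℓ)
        = (2:ℂ)⁻¹ * ((Xl x * Xl x) * ω (t*t)) + (Xl x * Yl x) * ω (t*(t*t))
          + (6:ℂ)⁻¹ * ((Xl x * Xl x * Xl x) * ω (t*(t*t))) := by
      intro x
      rw [← Finset.sum_subset (Finset.Icc_subset_Icc_right hν3 : Finset.Icc 2 3 ⊆ _)]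
      · rw [Finset.sum_Icc_succ_top (by norm_num : 2 ≤ 3), Finset.Icc_self,
          Finset.sum_singleton]
        show ((Nat.factorial 2 : ℂ))⁻¹ * ω ((φ x) * (φ x))
            + ((Nat.factorial 3 : ℂ))⁻¹ * ω (upow (φ x) 3) = _
        rw [hu2 x, hu3 x, map_add, map_smul, map_smul, map_smul]
        simp only [smul_eq_mul, Nat.factorial]
        norm_num
        ring
      · intro ℓ hℓ hℓ2
        simp only [Finset.mem_Icc] at hℓ hℓ2
        obtain ⟨m, rfl⟩ : ∃ m, ℓ = m + 4 := ⟨ℓ - 4, by omega⟩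
        rw [hupow x m, map_zero, mul_zero]
    obtain ⟨l, hl⟩ := IsAlgClosed.exists_pow_nat_eq (k := ℂ) ((6:ℂ)⁻¹) (n := 3) (by omega)
    have hl0 : l ≠ 0 := by
      intro h
      rw [h, zero_pow (by omega)] at hl
      norm_num at hl
    set β : ℂ := ω (t*t) / (2 * ω (t*(t*t))) with hβ
    set hmap : (Fin 2 → ℂ) →ₗ[ℂ] (Fin 2 → ℂ) :=
      { toFun := fun x => ![l * Xl x, l⁻¹ * (Yl x + β * Xl x)]
        map_add' := by
          intro x y
          funext i
          fin_cases i <;> simp [mul_add] <;> ring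
        map_smul' := by
          intro r x
          funext i
          fin_cases i <;> simp [smul_eq_mul] <;> ring } with hmapdef
    have hinj : ∀ x, hmap x = 0 → x = 0 := by
      intro x hx
      have h0 := congrFun hx 0
      have h1 := congrFun hx 1
      simp only [hmapdef, LinearMap.coe_mk, AddHom.coe_mk, Matrix.cons_val_zero,
        Matrix.cons_val_one, Matrix.head_cons, Pi.zero_apply] at h0 h1
      have hX : Xl x = 0 := by
        rcases mul_eq_zero.1 h0 with h | h
        · exact absurd h hl0
        · exact h
      have hY : Yl x = 0 := by
        rcases mul_eq_zero.1 h1 with h | h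
        · exact absurd h (inv_ne_zero hl0)
        · rw [hX, mul_zero, add_zero] at h; exact h
      have hφx : φ x = Zl x • (t*(t*t)) := by
        rw [hcoord x, hX, hY, zero_smul, zero_smul, zero_add, zero_add]
      have hker : ω (φ x) = 0 := by
        have : φ x ∈ LinearMap.ker ω := hrange ▸ LinearMap.mem_range_self φ x
        exact this
      rw [hφx, map_smul, smul_eq_mul] at hker
      have hZ : Zl x = 0 := by
        rcases mul_eq_zero.1 hker with h | h
        · exact h
        · exact absurd h hωt3
      apply hφ
      rw [hφx, hZ, zero_smul, map_zero]
    have hkerb : LinearMap.ker hmap = ⊥ := LinearMap.ker_eq_bot'.2 hinj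
    have hinj' : Function.Injective hmap := LinearMap.ker_eq_bot.1 hkerb
    have hbij : Function.Bijective hmap := ⟨hinj', LinearMap.injective_iff_surjective.1 hinj'⟩
    refine ⟨ω (t*(t*t)), LinearEquiv.ofBijective hmap hbij, hωt3, Or.inl ?_⟩
    intro x
    rw [hsum x]
    rw [show (LinearEquiv.ofBijective hmap hbij) x = hmap x from rfl]
    simp only [hmapdef, LinearMap.coe_mk, AddHom.coe_mk, Matrix.cons_val_zero,
      Matrix.cons_val_one, Matrix.head_cons, hβ]
    have h6 : (6:ℂ) * l^3 = 1 := by rw [hl]; norm_num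
    field_simp
    ring_nf
    linear_combination (-(2 * Xl x ^ 3 * ω (t * (t * t)))) * h6
  · -- Case B
    obtain ⟨B, hBi, hli⟩ := basis_of_span hdim ![a, b, a*a] (by simpa using hsp)
    have hene : a * a ≠ 0 := by simpa using hli.ne_zero 2
    have hbb : b * b = a * a := hab.symm
    have hea : (a*a)*a = 0 := by rw [mul_comm]; exact ha3
    have heb : (a*a)*b = 0 := by rw [mul_comm]; exact hb3
    have hba : b * a = 0 := by rw [mul_comm]; exact hab0
    have heann : a * a ∈ annN N := by
      intro v
      have hv : v ∈ Submodule.span ℂ ({a, b, a*a} : Set N) := by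
        rw [hsp]; exact Submodule.mem_top
      have hker : Submodule.span ℂ ({a, b, a*a} : Set N) ≤
          LinearMap.ker (LinearMap.mulLeft ℂ (a*a)) := by
        rw [Submodule.span_le]
        rintro x hx
        simp only [Set.mem_insert_iff, Set.mem_singleton_iff] at hx
        rcases hx with rfl | rfl | rfl
        exacts [hea, heb, hee]
      exact hker hv
    have hann_eq : Submodule.span ℂ {a*a} = annN N := by
      apply Submodule.eq_of_le_of_finrank_le
      · rw [Submodule.span_le, Set.singleton_subset_iff]; exact heann
      · rw [hann, finrank_span_singleton hene]
    have hωe : ω (a*a) ≠ 0 := by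
      obtain ⟨z, hzann, hz0⟩ := hω
      rw [← hann_eq] at hzann
      obtain ⟨γ, rfl⟩ := Submodule.mem_span_singleton.1 hzann
      intro h
      rw [map_smul, smul_eq_mul, h, mul_zero] at hz0
      exact hz0 rfl
    have hν2 : 2 ≤ ν := by
      by_contra hc
      push_neg at hc
      have hle : npow N 2 ≤ npow N (ν+1) := npow_antitone (by omega)
      rw [hν] at hle
      exact hene (by simpa using hle (mul_mem_npow2 a a))
    set Xl := (B.coord 0).comp φ with hXl
    set Yl := (B.coord 1).comp φ with hYl
    set Zl := (B.coord 2).comp φ with hZl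
    have hcoord : ∀ x, φ x = Xl x • a + Yl x • b + Zl x • (a*a) := by
      intro x
      conv_lhs => rw [← B.sum_repr (φ x)]
      rw [Fin.sum_univ_three]
      simp only [hXl, hYl, hZl, LinearMap.comp_apply, Module.Basis.coord_apply]
      rw [hBi 0, hBi 1, hBi 2]
      simp
    have hu2 : ∀ x, (φ x) * (φ x) = (Xl x * Xl x + Yl x * Yl x) • (a*a) := by
      intro x
      rw [hcoord x]
      simp only [add_mul, mul_add, smul_mul_assoc, mul_smul_comm, smul_smul,
        hab0, hba, hbb, ha3, hb3, hee, hea, heb, smul_zero, add_zero, zero_add]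
      module
    have hu3 : ∀ x, upow (φ x) 3 = 0 := by
      intro x
      show (φ x) * ((φ x) * (φ x)) = 0
      rw [hu2 x, mul_smul_comm, hcoord x, add_mul, add_mul, smul_mul_assoc, smul_mul_assoc,
        smul_mul_assoc, ha3, hb3, hee, smul_zero, smul_zero, smul_zero, add_zero, add_zero,
        smul_zero]
    have hupow : ∀ x m, upow (φ x) (m+3) = 0 := by
      intro x m
      induction m with
      | zero => exact hu3 x
      | succ m ih =>
        show (φ x) * upow (φ x) (m+3) = 0
        rw [ih, mul_zero]
    have hsum : ∀ x, ∑ ℓ ∈ Finset.Icc 2 ν, ((Nat.factorial ℓ : ℂ))⁻¹ * ω (upow (φ x) ℓ)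
        = (2:ℂ)⁻¹ * ((Xl x * Xl x + Yl x * Yl x) * ω (a*a)) := by
      intro x
      rw [← Finset.sum_subset (Finset.Icc_subset_Icc_right hν2 : Finset.Icc 2 2 ⊆ _)]
      · rw [Finset.Icc_self, Finset.sum_singleton]
        show ((Nat.factorial 2 : ℂ))⁻¹ * ω ((φ x) * (φ x)) = _
        rw [hu2 x, map_smul, smul_eq_mul]
        norm_num [Nat.factorial]
      · intro ℓ hℓ hℓ2
        simp only [Finset.mem_Icc] at hℓ hℓ2
        obtain ⟨m, rfl⟩ : ∃ m, ℓ = m + 3 := ⟨ℓ - 3, by omega⟩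
        rw [hupow x m, map_zero, mul_zero]
    set hmap : (Fin 2 → ℂ) →ₗ[ℂ] (Fin 2 → ℂ) :=
      { toFun := fun x => ![Xl x + Complex.I * Yl x, Xl x - Complex.I * Yl x]
        map_add' := by
          intro x y
          funext i
          fin_cases i <;> simp [mul_add] <;> ring
        map_smul' := by
          intro r x
          funext i
          fin_cases i <;> simp [smul_eq_mul] <;> ring } with hmapdef
    have hinj : ∀ x, hmap x = 0 → x = 0 := by
      intro x hx
      have h0 := congrFun hx 0
      have h1 := congrFun hx 1
      simp only [hmapdef, LinearMap.coe_mk, AddHom.coe_mk, Matrix.cons_val_zero,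
        Matrix.cons_val_one, Matrix.head_cons, Pi.zero_apply] at h0 h1
      have hX : Xl x = 0 := by linear_combination (h0 + h1) / 2
      have hY : Yl x = 0 := by
        have hIY : Complex.I * Yl x = 0 := by linear_combination (h0 - h1) / 2
        rcases mul_eq_zero.1 hIY with h | h
        · exact absurd h Complex.I_ne_zero
        · exact h
      have hφx : φ x = Zl x • (a*a) := by
        rw [hcoord x, hX, hY, zero_smul, zero_smul, zero_add, zero_add]
      have hker : ω (φ x) = 0 := by
        have : φ x ∈ LinearMap.ker ω := hrange ▸ LinearMap.mem_range_self φ x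
        exact this
      rw [hφx, map_smul, smul_eq_mul] at hker
      have hZ : Zl x = 0 := by
        rcases mul_eq_zero.1 hker with h | h
        · exact h
        · exact absurd h hωe
      apply hφ
      rw [hφx, hZ, zero_smul, map_zero]
    have hker : LinearMap.ker hmap = ⊥ := LinearMap.ker_eq_bot'.2 hinj
    have hinj' : Function.Injective hmap := LinearMap.ker_eq_bot.1 hker
    have hbij : Function.Bijective hmap := ⟨hinj', LinearMap.injective_iff_surjective.1 hinj'⟩
    refine ⟨ω (a*a) / 2, LinearEquiv.ofBijective hmap hbij,
      div_ne_zero hωe two_ne_zero, Or.inr ?_⟩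
    intro x
    rw [hsum x]
    rw [show (LinearEquiv.ofBijective hmap hbij) x = hmap x from rfl]
    simp only [hmapdef, LinearMap.coe_mk, AddHom.coe_mk, Matrix.cons_val_zero,
      Matrix.cons_val_one, Matrix.head_cons]
    linear_combination (ω (a*a) / 2 * Yl x * Yl x) * Complex.I_sq

lemma part2 : ¬ ∃ (c : ℂ) (g : (Fin 2 → ℂ) ≃ₗ[ℂ] (Fin 2 → ℂ)), c ≠ 0 ∧
    ∀ x : Fin 2 → ℂ, x 0 * x 1 + (x 0) ^ 3 = c * (g x 0 * g x 1) := by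
  rintro ⟨c, g, -, h⟩
  have h1 := h ![1, 0]
  have h2 := h ![2, 0]
  have hg : g ![(2:ℂ), 0] = (2:ℂ) • g ![1, 0] := by
    rw [← map_smul]
    congr 1
    funext i
    fin_cases i <;> norm_num
  rw [hg] at h2
  simp only [Matrix.cons_val_zero, Matrix.cons_val_one, Matrix.head_cons, Pi.smul_apply,
    smul_eq_mul] at h1 h2
  norm_num at h1 h2
  have : (8:ℂ) = 4 := by linear_combination h2 - 4 * h1
  norm_num at this

end AuxLemmas

/-- There are exactly two linear equivalence classes of nil-polynomials
on `ℂ²`, represented by `Q₁(x) = x₁x₂ + x₁³` and `Q₂(x) = x₁x₂`: every nil-polynomial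
on `ℂ²` (arising from a 3-dimensional admissible algebra) is linearly equivalent to one
of them, and they are not linearly equivalent to each other. Equivalently, every
3-dimensional admissible algebra is either generated by a single element `t` with
`t⁴ = 0` (and basis `t, t², t³`), or has a basis `a, b, c` with `a² = b² = c`,
`ab = ac = bc = c² = 0`. -/
theorem stmt16 :
    (∀ (N : Type) (_ : NonUnitalCommRing N) (_ : Module ℂ N) (_ : SMulCommClass ℂ N N)
        (_ : IsScalarTower ℂ N N) (_ : FiniteDimensional ℂ N)
        (ν : ℕ), npow N (ν + 1) = ⊥ → Module.finrank ℂ (annN N) = 1 →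
        Module.finrank ℂ N = 3 →
        ∀ (ω : N →ₗ[ℂ] ℂ), (∃ a ∈ annN N, ω a ≠ 0) →
        ∀ (φ : (Fin 2 → ℂ) →ₗ[ℂ] N), Function.Injective φ →
          LinearMap.range φ = LinearMap.ker ω →
        ∃ (c : ℂ) (g : (Fin 2 → ℂ) ≃ₗ[ℂ] (Fin 2 → ℂ)), c ≠ 0 ∧
          ((∀ x : Fin 2 → ℂ,
              ∑ ℓ ∈ Finset.Icc 2 ν, ((Nat.factorial ℓ : ℂ))⁻¹ * ω (upow (φ x) ℓ)
                = c * (g x 0 * g x 1 + (g x 0) ^ 3)) ∨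
           (∀ x : Fin 2 → ℂ,
              ∑ ℓ ∈ Finset.Icc 2 ν, ((Nat.factorial ℓ : ℂ))⁻¹ * ω (upow (φ x) ℓ)
                = c * (g x 0 * g x 1)))) ∧
    (¬ ∃ (c : ℂ) (g : (Fin 2 → ℂ) ≃ₗ[ℂ] (Fin 2 → ℂ)), c ≠ 0 ∧
        ∀ x : Fin 2 → ℂ, x 0 * x 1 + (x 0) ^ 3 = c * (g x 0 * g x 1)) ∧
    (∀ (N : Type) (_ : NonUnitalCommRing N) (_ : Module ℂ N) (_ : SMulCommClass ℂ N N)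
        (_ : IsScalarTower ℂ N N) (_ : FiniteDimensional ℂ N)
        (ν : ℕ), npow N (ν + 1) = ⊥ → Module.finrank ℂ (annN N) = 1 →
        Module.finrank ℂ N = 3 →
        ((∃ t : N, upow t 4 = 0 ∧ Submodule.span ℂ {t, t * t, t * (t * t)} = ⊤) ∨
         (∃ a b : N, a * a = b * b ∧ a * b = 0 ∧ a * (a * a) = 0 ∧ b * (a * a) = 0 ∧
            (a * a) * (a * a) = 0 ∧ Submodule.span ℂ {a, b, a * a} = ⊤))) := by
  refine ⟨?_, ?_, ?_⟩
  · intro N i1 i2 i3 i4 i5 ν hν hann hdim ω hω φ hφ hrange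
    exact @part1 N i1 i2 i3 i4 i5 ν hν hann hdim ω hω φ hφ hrange
  · exact part2
  · intro N i1 i2 i3 i4 i5 ν hν hann hdim
    exact @classify N i1 i2 i3 i4 i5 ν hν hann hdim
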